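/- Let A ⊆ O be a semi-module and suppose that φ_A(b) ∈ {0, 1} for all b ∈ Ā (the minuscule case). For τ ∈ ℤ/dℤ and 1 ≤ i < j ≤ h, define V_{i,j}(A) = {(b, k) : b ∈ Ā^i, b + k ∈ Ā^j, k ≥ 1, φ_A(b) > φ_A(b + k)}, and suppose that for all b ∈ Ā^i and b' ∈ Ā^j in the same component {τ} × ℤ one has b ≤ b' whenever i < j (A is ordered) — so that every element of Ā^j ∩ ({τ}×ℤ) exceeds every element of Ā^i ∩ ({τ}×ℤ). Then |V_{i,j}(A)| = Σ_{τ ∈ ℤ/dℤ} m_{A,τ}^j · (n' − m_{A,τ}^i), where m_{A,τ}^k = #{b ∈ Ā^k ∩ ({τ+1} × ℤ) : φ_A(b) = 1} and n' = n/h = |Ā^k ∩ ({τ}×ℤ)|. -/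

import Mathlib

/-- The set `O = (ℤ/dℤ) × ℤ`; shift the second coordinate by `k`. -/
def shiftO (d : ℕ) (a : ZMod d × ℤ) (k : ℤ) : ZMod d × ℤ := (a.1, a.2 + k)

/-- The map `f : O → O`, `f(τ, i) = (τ-1, i+m)` if `τ = 1`, else `(τ-1, i)`. -/
def fO (d m : ℕ) (a : ZMod d × ℤ) : ZMod d × ℤ :=
  if a.1 = 1 then (a.1 - 1, a.2 + (m : ℤ)) else (a.1 - 1, a.2)

/-- `A ⊆ O` is a semi-module: bounded below in each component, `A + n ⊆ A`,
`f(A) ⊆ A`, and `O = A + nℤ`. -/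
def IsSemiModule (d n m : ℕ) (A : Set (ZMod d × ℤ)) : Prop :=
  (∀ τ : ZMod d, ∃ N : ℤ, ∀ i : ℤ, (τ, i) ∈ A → N ≤ i) ∧
  (∀ a ∈ A, shiftO d a (n : ℤ) ∈ A) ∧
  (∀ a ∈ A, fO d m a ∈ A) ∧
  (∀ x : ZMod d × ℤ, ∃ a ∈ A, ∃ k : ℤ, x = shiftO d a (k * (n : ℤ)))

/-- `Ā = A \ (A + n)`. -/
def Abar (d n : ℕ) (A : Set (ZMod d × ℤ)) : Set (ZMod d × ℤ) :=
  A \ ((fun a => shiftO d a (n : ℤ)) '' A)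

/-- `O^k = {(τ, i) : i ≡ k (mod h)}` where `h = gcd(m, n)`. -/
def Omod (d h : ℕ) (k : ℤ) : Set (ZMod d × ℤ) := {a | (h : ℤ) ∣ (a.2 - k)}

namespace Stmt18Aux

variable {d n m : ℕ} {A : Set (ZMod d × ℤ)}

lemma mem_abar {a : ZMod d × ℤ} :
    a ∈ Abar d n A ↔ a ∈ A ∧ (a.1, a.2 - (n : ℤ)) ∉ A := by
  constructor
  · rintro ⟨h1, h2⟩
    refine ⟨h1, fun hc => h2 ⟨(a.1, a.2 - n), hc, ?_⟩⟩
    simp [shiftO]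
  · rintro ⟨h1, h2⟩
    refine ⟨h1, ?_⟩
    rintro ⟨b, hb, hba⟩
    apply h2
    have : b = (a.1, a.2 - n) := by
      simp only [shiftO, Prod.ext_iff] at hba ⊢
      exact ⟨hba.1, by omega⟩
    rwa [this] at hb

lemma add_nat_mul_mem (hA : IsSemiModule d n m A) {τ : ZMod d} {x : ℤ}
    (hx : (τ, x) ∈ A) (k : ℕ) : (τ, x + k * n) ∈ A := by
  induction k with
  | zero => simpa using hx
  | succ k ih =>
      have := hA.2.1 _ ih
      simp only [shiftO] at this
      have he : ((k : ℤ) + 1) * n = k * n + n := by ring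
      rw [Nat.cast_succ, he, ← add_assoc]
      exact this

/-- characterization of `Ā`: minimal in its residue class mod `n`. -/
lemma abar_char (hA : IsSemiModule d n m A) (hn : 1 ≤ n) {τ : ZMod d} {x : ℤ} :
    (τ, x) ∈ Abar d n A ↔
      ((τ, x) ∈ A ∧ ∀ y : ℤ, (τ, y) ∈ A → (n : ℤ) ∣ y - x → x ≤ y) := by
  rw [mem_abar]
  constructor
  · rintro ⟨h1, h2⟩
    refine ⟨h1, fun y hy ⟨c, hc⟩ => ?_⟩
    by_contra hlt
    push_neg at hlt
    have hc1 : c ≤ -1 := by nlinarith [hn, (by exact_mod_cast hn : (1:ℤ) ≤ n)]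
    have : x - n = y + ((-c-1).toNat : ℤ) * n := by
      rw [Int.toNat_of_nonneg (by omega)]
      have hn' : (1:ℤ) ≤ (n:ℤ) := by exact_mod_cast hn
      nlinarith
    exact h2 (by rw [this]; exact add_nat_mul_mem hA hy _)
  · rintro ⟨h1, h2⟩
    refine ⟨h1, fun hc => ?_⟩
    have := h2 _ hc ⟨-1, by ring⟩
    have hn' : (1:ℤ) ≤ (n:ℤ) := by exact_mod_cast hn
    omega

lemma abar_unique (hA : IsSemiModule d n m A) (hn : 1 ≤ n) {τ : ZMod d} {x y : ℤ}
    (hx : (τ, x) ∈ Abar d n A) (hy : (τ, y) ∈ Abar d n A)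
    (hdvd : (n : ℤ) ∣ y - x) : x = y := by
  have h1 := ((abar_char hA hn).1 hx).2 y ((abar_char hA hn).1 hy).1 hdvd
  have h2 := ((abar_char hA hn).1 hy).2 x ((abar_char hA hn).1 hx).1 ⟨-(hdvd.choose), by
    have := hdvd.choose_spec; linarith⟩
  omega

lemma exists_min (hA : IsSemiModule d n m A) (τ : ZMod d) (r : ℤ) :
    ∃ x : ℤ, ((τ, x) ∈ A ∧ (n : ℤ) ∣ x - r) ∧
      ∀ y : ℤ, ((τ, y) ∈ A ∧ (n : ℤ) ∣ y - r) → x ≤ y := by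
  apply Int.exists_least_of_bdd
  · obtain ⟨N, hN⟩ := hA.1 τ
    exact ⟨N, fun z hz => hN z hz.1⟩
  · obtain ⟨a, ha, k, hk⟩ := hA.2.2.2 (τ, r)
    simp only [shiftO, Prod.ext_iff] at hk
    refine ⟨a.2, by rw [hk.1]; exact ha, ⟨-k, by rw [hk.2]; ring⟩⟩

/-- the minimal element of `A` in component `τ`, residue class `r` mod `n`. -/
noncomputable def mu (hA : IsSemiModule d n m A) (τ : ZMod d) (r : ℤ) : ℤ :=
  (exists_min hA τ r).choose

lemma mu_spec (hA : IsSemiModule d n m A) (τ : ZMod d) (r : ℤ) :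
    ((τ, mu hA τ r) ∈ A ∧ (n : ℤ) ∣ mu hA τ r - r) ∧
      ∀ y : ℤ, ((τ, y) ∈ A ∧ (n : ℤ) ∣ y - r) → mu hA τ r ≤ y :=
  (exists_min hA τ r).choose_spec

lemma mu_mem_abar (hA : IsSemiModule d n m A) (hn : 1 ≤ n) (τ : ZMod d) (r : ℤ) :
    (τ, mu hA τ r) ∈ Abar d n A := by
  rw [abar_char hA hn]
  obtain ⟨⟨h1, h2⟩, h3⟩ := mu_spec hA τ r
  exact ⟨h1, fun y hy hdvd => h3 y ⟨hy, by
    obtain ⟨c, hc⟩ := hdvd; obtain ⟨c', hc'⟩ := h2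
    exact ⟨c + c', by linarith⟩⟩⟩

lemma abar_eq_mu (hA : IsSemiModule d n m A) (hn : 1 ≤ n) {τ : ZMod d} {x : ℤ}
    (hx : (τ, x) ∈ Abar d n A) : x = mu hA τ x := by
  exact abar_unique hA hn hx (mu_mem_abar hA hn τ x) (mu_spec hA τ x).1.2

lemma mu_congr (hA : IsSemiModule d n m A) (hn : 1 ≤ n) (τ : ZMod d) {r r' : ℤ}
    (h : (n : ℤ) ∣ r - r') : mu hA τ r = mu hA τ r' := by
  apply abar_unique hA hn (mu_mem_abar hA hn τ r) (mu_mem_abar hA hn τ r')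
  obtain ⟨c, hc⟩ := (mu_spec hA τ r).1.2
  obtain ⟨c', hc'⟩ := (mu_spec hA τ r').1.2
  obtain ⟨e, he⟩ := h
  exact ⟨c' - c - e, by linarith⟩

noncomputable def Ffin (n h : ℕ) (k : ℤ) : Finset ℤ :=
  (Finset.Ico (0:ℤ) (n:ℤ)).filter (fun r => (h:ℤ) ∣ r - k)

lemma Ffin_card {n h : ℕ} (hh : 1 ≤ h) (hdvd : h ∣ n) (k : ℤ) :
    (Ffin n h k).card = n / h := by
  classical
  have hh' : (0:ℤ) < h := by exact_mod_cast hh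
  have hnh : (h:ℤ) * ((n/h : ℕ) : ℤ) = n := by exact_mod_cast Nat.mul_div_cancel' hdvd
  rw [show n / h = (Finset.Ico (0:ℤ) ((n/h : ℕ):ℤ)).card from by rw [Int.card_Ico, sub_zero, Int.toNat_natCast]]
  symm
  apply Finset.card_bij (fun t _ => k % h + (h:ℤ) * t)
  · intro t ht
    simp only [Finset.mem_Ico] at ht
    simp only [Ffin, Finset.mem_filter, Finset.mem_Ico]
    have hkm0 : 0 ≤ k % h := Int.emod_nonneg k (by positivity)
    have hkmh : k % h < h := Int.emod_lt_of_pos k hh'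
    refine ⟨⟨by nlinarith, by nlinarith [ht.1, ht.2]⟩, ?_⟩
    have hd : (h:ℤ) ∣ k % h - k := by
      rw [Int.emod_def]; exact ⟨-(k / h), by ring⟩
    obtain ⟨c, hc⟩ := hd
    exact ⟨c + t, by linarith [hc]⟩
  · intro t ht t' ht' he
    exact mul_left_cancel₀ (ne_of_gt hh') (by linarith : (h:ℤ) * t = h * t')
  · intro r hr
    simp only [Ffin, Finset.mem_filter, Finset.mem_Ico] at hr
    obtain ⟨⟨hr0, hrn⟩, hdv⟩ := hr
    have h2 : (h:ℤ) ∣ r - k % h := by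
      obtain ⟨c, hc⟩ := hdv
      refine ⟨c + k / h, ?_⟩
      rw [Int.emod_def]; linarith [hc]
    obtain ⟨t, ht⟩ := h2
    have hkm0 : 0 ≤ k % h := Int.emod_nonneg k (by positivity)
    have hkmh : k % h < h := Int.emod_lt_of_pos k hh'
    have ht0 : 0 ≤ t := by nlinarith
    have htn : t < ((n/h:ℕ):ℤ) := by nlinarith
    exact ⟨t, Finset.mem_Ico.2 ⟨ht0, htn⟩, by linarith⟩

/-- the finite set `Ā ∩ O^k ∩ ({τ} × ℤ)`. -/
noncomputable def Bfin (hA : IsSemiModule d n m A) (h : ℕ) (τ : ZMod d) (k : ℤ) :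
    Finset (ZMod d × ℤ) := (Ffin n h k).image (fun r => (τ, mu hA τ r))

lemma mu_injOn (hA : IsSemiModule d n m A) (hn : 1 ≤ n) {h : ℕ} (τ : ZMod d) (k : ℤ) :
    Set.InjOn (fun r => ((τ, mu hA τ r) : ZMod d × ℤ)) (Ffin n h k) := by
  intro r hr r' hr' he
  simp only [Ffin, Finset.coe_filter, Finset.mem_Ico, Set.mem_setOf_eq] at hr hr'
  simp only [Prod.mk.injEq, true_and] at he
  obtain ⟨c, hc⟩ := (mu_spec hA τ r).1.2
  obtain ⟨c', hc'⟩ := (mu_spec hA τ r').1.2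
  have hdvd : (n:ℤ) ∣ r - r' := ⟨c' - c, by rw [← he] at hc'; linarith⟩
  obtain ⟨e, he'⟩ := hdvd
  have hn' : (0:ℤ) < n := by exact_mod_cast hn
  have he0 : e = 0 := by
    by_contra h0
    rcases lt_or_gt_of_ne h0 with h1 | h1
    · nlinarith [hr.1.1, hr.1.2, hr'.1.1, hr'.1.2]
    · nlinarith [hr.1.1, hr.1.2, hr'.1.1, hr'.1.2]
  rw [he0, mul_zero] at he'
  omega

lemma Bfin_card (hA : IsSemiModule d n m A) (hn : 1 ≤ n) {h : ℕ}
    (hh : 1 ≤ h) (hdvd : h ∣ n) (τ : ZMod d) (k : ℤ) :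
    (Bfin hA h τ k).card = n / h := by
  rw [Bfin, Finset.card_image_of_injOn (mu_injOn hA hn τ k), Ffin_card hh hdvd]

lemma mem_Bfin (hA : IsSemiModule d n m A) (hn : 1 ≤ n) {h : ℕ}
    (hdvd : h ∣ n) {τ : ZMod d} {k : ℤ} {b : ZMod d × ℤ} :
    b ∈ Bfin hA h τ k ↔ b ∈ Abar d n A ∧ b.1 = τ ∧ (h:ℤ) ∣ b.2 - k := by
  have hn' : (0:ℤ) < n := by exact_mod_cast hn
  obtain ⟨q, hq⟩ := hdvd
  constructor
  · intro hb
    simp only [Bfin, Finset.mem_image, Ffin, Finset.mem_filter, Finset.mem_Ico] at hb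
    obtain ⟨r, ⟨⟨hr0, hrn⟩, hrk⟩, hrb⟩ := hb
    subst hrb
    refine ⟨mu_mem_abar hA hn τ r, rfl, ?_⟩
    obtain ⟨c, hc⟩ := (mu_spec hA τ r).1.2
    obtain ⟨e, he⟩ := hrk
    exact ⟨c * q + e, by simp only []; push_cast [hq] at hc ⊢; nlinarith⟩
  · rintro ⟨hb, hbτ, hbk⟩
    simp only [Bfin, Finset.mem_image, Ffin, Finset.mem_filter, Finset.mem_Ico]
    refine ⟨b.2 % n, ⟨⟨Int.emod_nonneg _ (by positivity), Int.emod_lt_of_pos _ hn'⟩, ?_⟩, ?_⟩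
    · have hd : (n:ℤ) ∣ b.2 % n - b.2 := by
        rw [Int.emod_def]; exact ⟨-(b.2 / n), by ring⟩
      obtain ⟨c, hc⟩ := hd
      obtain ⟨e, he⟩ := hbk
      refine ⟨c * q + e, ?_⟩
      push_cast [hq] at hc ⊢
      nlinarith
    · have hmu : mu hA τ (b.2 % n) = mu hA τ b.2 := by
        apply mu_congr hA hn
        rw [Int.emod_def]; exact ⟨-(b.2 / n), by ring⟩
      rw [hmu]
      obtain ⟨τ', i⟩ := b
      simp only [] at hbτ ⊢
      subst hbτ
      rw [← abar_eq_mu hA hn hb]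

/-- the normalized map `g(b) = f(b) - φ(b)·n`. -/
def gmap (d n m : ℕ) (φ : ZMod d × ℤ → ℤ) (b : ZMod d × ℤ) : ZMod d × ℤ :=
  shiftO d (fO d m b) (-(φ b * (n : ℤ)))

lemma gmap_fst (φ : ZMod d × ℤ → ℤ) (b : ZMod d × ℤ) :
    (gmap d n m φ b).1 = b.1 - 1 := by
  unfold gmap shiftO fO; split <;> simp

lemma gmap_snd (φ : ZMod d × ℤ → ℤ) (b : ZMod d × ℤ) :
    (gmap d n m φ b).2 = b.2 + (if b.1 = 1 then (m:ℤ) else 0) - φ b * n := by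
  unfold gmap shiftO fO; split <;> (rename_i hsp; simp [hsp]) <;> ring

lemma gmap_injOn (hA : IsSemiModule d n m A) (hn : 1 ≤ n) (φ : ZMod d × ℤ → ℤ) :
    Set.InjOn (gmap d n m φ) (Abar d n A) := by
  intro b hb b' hb' he
  have h1 : b.1 = b'.1 := by
    have := congrArg Prod.fst he
    rw [gmap_fst, gmap_fst] at this
    exact sub_left_injective this
  have h2 := congrArg Prod.snd he
  rw [gmap_snd, gmap_snd, h1] at h2
  have hdvd : (n:ℤ) ∣ b'.2 - b.2 := ⟨φ b' - φ b, by linarith⟩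
  obtain ⟨τ, x⟩ := b
  obtain ⟨τ', x'⟩ := b'
  simp only [] at h1
  subst h1
  have := abar_unique hA hn hb hb' hdvd
  simp [this]

lemma gmap_mem_Bfin (hA : IsSemiModule d n m A) (hn : 1 ≤ n) {h : ℕ}
    (hdn : h ∣ n) (hdm : h ∣ m)
    (φ : ZMod d × ℤ → ℤ)
    (hφ : ∀ a ∈ A, shiftO d (fO d m a) (-(φ a * (n : ℤ))) ∈ Abar d n A)
    {τ : ZMod d} {k : ℤ} {b : ZMod d × ℤ} (hb : b ∈ Bfin hA h τ k) :
    gmap d n m φ b ∈ Bfin hA h (τ - 1) k := by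
  rw [mem_Bfin hA hn hdn] at hb ⊢
  obtain ⟨hb1, hb2, hb3⟩ := hb
  refine ⟨hφ b hb1.1, by rw [gmap_fst, hb2], ?_⟩
  rw [gmap_snd]
  obtain ⟨c, hc⟩ := hb3
  obtain ⟨qn, hqn⟩ : (h:ℤ) ∣ (n:ℤ) := ⟨(n/h : ℕ), by exact_mod_cast (Nat.mul_div_cancel' hdn).symm⟩
  obtain ⟨qm, hqm⟩ : (h:ℤ) ∣ (m:ℤ) := ⟨(m/h : ℕ), by exact_mod_cast (Nat.mul_div_cancel' hdm).symm⟩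
  split
  · refine ⟨c + qm - φ b * qn, ?_⟩
    rw [hqm, hqn]; linear_combination hc
  · refine ⟨c - φ b * qn, ?_⟩
    rw [hqn]; linear_combination hc

/-- the finite set `Ā ∩ O^k`. -/
noncomputable def Tfin (hA : IsSemiModule d n m A) [NeZero d] (h : ℕ) (k : ℤ) :
    Finset (ZMod d × ℤ) := Finset.univ.biUnion (fun τ => Bfin hA h τ k)

lemma mem_Tfin (hA : IsSemiModule d n m A) [NeZero d] (hn : 1 ≤ n) {h : ℕ}
    (hdn : h ∣ n) {k : ℤ} {b : ZMod d × ℤ} :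
    b ∈ Tfin hA h k ↔ b ∈ Abar d n A ∧ (h:ℤ) ∣ b.2 - k := by
  simp only [Tfin, Finset.mem_biUnion, Finset.mem_univ, true_and]
  constructor
  · rintro ⟨τ, hτ⟩
    rw [mem_Bfin hA hn hdn] at hτ
    exact ⟨hτ.1, hτ.2.2⟩
  · rintro ⟨h1, h2⟩
    exact ⟨b.1, (mem_Bfin hA hn hdn).2 ⟨h1, rfl, h2⟩⟩

lemma Tfin_subset_abar (hA : IsSemiModule d n m A) [NeZero d] (hn : 1 ≤ n) {h : ℕ}
    (hdn : h ∣ n) {k : ℤ} : ↑(Tfin hA h k) ⊆ Abar d n A := by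
  intro b hb
  exact ((mem_Tfin hA hn hdn).1 hb).1

lemma gmap_image_Tfin (hA : IsSemiModule d n m A) [NeZero d] (hn : 1 ≤ n) {h : ℕ}
    (hdn : h ∣ n) (hdm : h ∣ m)
    (φ : ZMod d × ℤ → ℤ)
    (hφ : ∀ a ∈ A, shiftO d (fO d m a) (-(φ a * (n : ℤ))) ∈ Abar d n A)
    (k : ℤ) : (Tfin hA h k).image (gmap d n m φ) = Tfin hA h k := by
  classical
  apply Finset.eq_of_subset_of_card_le
  · intro b hb
    simp only [Finset.mem_image] at hb
    obtain ⟨a, ha, hab⟩ := hb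
    simp only [Tfin, Finset.mem_biUnion, Finset.mem_univ, true_and] at ha ⊢
    obtain ⟨τ, hτ⟩ := ha
    exact ⟨τ - 1, hab ▸ gmap_mem_Bfin hA hn hdn hdm φ hφ hτ⟩
  · rw [Finset.card_image_of_injOn
      ((gmap_injOn hA hn φ).mono (Tfin_subset_abar hA hn hdn))]

lemma sum_gmap (hA : IsSemiModule d n m A) [NeZero d] (hn : 1 ≤ n) {h : ℕ}
    (hdn : h ∣ n) (hdm : h ∣ m)
    (φ : ZMod d × ℤ → ℤ)
    (hφ : ∀ a ∈ A, shiftO d (fO d m a) (-(φ a * (n : ℤ))) ∈ Abar d n A)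
    (k : ℤ) (F : ZMod d × ℤ → ℤ) :
    ∑ b ∈ Tfin hA h k, F (gmap d n m φ b) = ∑ b ∈ Tfin hA h k, F b := by
  classical
  conv_rhs => rw [← gmap_image_Tfin hA hn hdn hdm φ hφ k]
  rw [Finset.sum_image]
  intro x hx y hy hxy
  exact (gmap_injOn hA hn φ) (Tfin_subset_abar hA hn hdn hx)
    (Tfin_subset_abar hA hn hdn hy) hxy

lemma filter_fst_Tfin (hA : IsSemiModule d n m A) [NeZero d] (hn : 1 ≤ n) {h : ℕ}
    (hdn : h ∣ n) (k : ℤ) (τ : ZMod d) [DecidablePred (fun b : ZMod d × ℤ => b.1 = τ)] :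
    (Tfin hA h k).filter (fun b => b.1 = τ) = Bfin hA h τ k := by
  ext b
  rw [Finset.mem_filter, mem_Tfin hA hn hdn, mem_Bfin hA hn hdn]
  tauto

/-- key identity: `n · Σ_{b ∈ Ā^k} φ(b) = m · n'`. -/
lemma key_sum (hA : IsSemiModule d n m A) [NeZero d] (hn : 1 ≤ n) {h : ℕ}
    (hh : 1 ≤ h) (hdn : h ∣ n) (hdm : h ∣ m)
    (φ : ZMod d × ℤ → ℤ)
    (hφ : ∀ a ∈ A, shiftO d (fO d m a) (-(φ a * (n : ℤ))) ∈ Abar d n A)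
    (k : ℤ) :
    (n:ℤ) * ∑ b ∈ Tfin hA h k, φ b = (m:ℤ) * ((n / h : ℕ) : ℤ) := by
  classical
  have h1 := sum_gmap hA hn hdn hdm φ hφ k Prod.snd
  simp only [gmap_snd] at h1
  rw [Finset.sum_sub_distrib, Finset.sum_add_distrib] at h1
  have h2 : ∑ b ∈ Tfin hA h k, (if b.1 = 1 then (m:ℤ) else 0) =
      (m:ℤ) * ((n / h : ℕ) : ℤ) := by
    rw [Finset.sum_ite, Finset.sum_const, Finset.sum_const_zero, add_zero,
      filter_fst_Tfin hA hn hdn k 1, Bfin_card hA hn hh hdn, nsmul_eq_mul, mul_comm]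
  rw [h2] at h1
  rw [Finset.mul_sum]
  have : ∀ b ∈ Tfin hA h k, (n:ℤ) * φ b = φ b * n := fun b _ => mul_comm _ _
  rw [Finset.sum_congr rfl this]
  linarith

open scoped Classical

lemma sum_phi_eq_card (hA : IsSemiModule d n m A) (hn : 1 ≤ n) {h : ℕ} (hdn : h ∣ n)
    (φ : ZMod d × ℤ → ℤ) (hmin : ∀ b ∈ Abar d n A, φ b = 0 ∨ φ b = 1)
    (τ : ZMod d) (k : ℤ) :
    ∑ b ∈ Bfin hA h τ k, φ b =
      (((Bfin hA h τ k).filter (fun b => φ b = 1)).card : ℤ) := by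
  rw [← Finset.sum_filter_add_sum_filter_not (Bfin hA h τ k) (fun b => φ b = 1)]
  have e1 : ∑ b ∈ (Bfin hA h τ k).filter (fun b => φ b = 1), φ b =
      (((Bfin hA h τ k).filter (fun b => φ b = 1)).card : ℤ) := by
    rw [Finset.sum_congr rfl (fun b hb => (Finset.mem_filter.1 hb).2), Finset.sum_const,
      nsmul_eq_mul, mul_one]
  have e2 : ∑ b ∈ (Bfin hA h τ k).filter (fun b => ¬ φ b = 1), φ b = 0 := by
    apply Finset.sum_eq_zero
    intro b hb
    obtain ⟨hb1, hb2⟩ := Finset.mem_filter.1 hb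
    rcases hmin b ((mem_Bfin hA hn hdn).1 hb1).1 with h0 | h1
    · exact h0
    · exact absurd h1 hb2
  rw [e1, e2, add_zero]

lemma card_filter_zero (hA : IsSemiModule d n m A) (hn : 1 ≤ n) {h : ℕ}
    (hh : 1 ≤ h) (hdn : h ∣ n)
    (φ : ZMod d × ℤ → ℤ) (hmin : ∀ b ∈ Abar d n A, φ b = 0 ∨ φ b = 1)
    (τ : ZMod d) (k : ℤ) :
    (((Bfin hA h τ k).filter (fun b => φ b = 0)).card : ℤ) =
      ((n / h : ℕ) : ℤ) - (((Bfin hA h τ k).filter (fun b => φ b = 1)).card : ℤ) := by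
  have hfe : (Bfin hA h τ k).filter (fun b => φ b = 0) =
      (Bfin hA h τ k).filter (fun b => ¬ φ b = 1) := by
    apply Finset.filter_congr
    intro b hb
    rcases hmin b ((mem_Bfin hA hn hdn).1 hb).1 with h0 | h0 <;> simp [h0]
  have := Finset.card_filter_add_card_filter_not
    (s := Bfin hA h τ k) (p := fun b => φ b = 1)
  rw [Bfin_card hA hn hh hdn] at this
  rw [hfe]
  omega

lemma disj_Bfin (hA : IsSemiModule d n m A) [NeZero d] (hn : 1 ≤ n) {h : ℕ} (hdn : h ∣ n)
    (k : ℤ) : ∀ τ₁ ∈ (Finset.univ : Finset (ZMod d)), ∀ τ₂ ∈ Finset.univ, τ₁ ≠ τ₂ →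
      Disjoint (Bfin hA h τ₁ k) (Bfin hA h τ₂ k) := by
  intro τ₁ _ τ₂ _ hne
  rw [Finset.disjoint_left]
  intro b hb1 hb2
  rw [mem_Bfin hA hn hdn] at hb1 hb2
  exact hne (hb1.2.1 ▸ hb2.2.1 ▸ rfl)

lemma sum_cnt_eq (hA : IsSemiModule d n m A) [NeZero d] (hn : 1 ≤ n) (hm : 1 ≤ m)
    {h : ℕ} (hh : 1 ≤ h) (hdn : h ∣ n) (hdm : h ∣ m)
    (φ : ZMod d × ℤ → ℤ)
    (hφ : ∀ a ∈ A, shiftO d (fO d m a) (-(φ a * (n : ℤ))) ∈ Abar d n A)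
    (hmin : ∀ b ∈ Abar d n A, φ b = 0 ∨ φ b = 1) (k k' : ℤ) :
    ∑ τ : ZMod d, (((Bfin hA h τ k).filter (fun b => φ b = 1)).card : ℤ) =
      ∑ τ : ZMod d, (((Bfin hA h τ k').filter (fun b => φ b = 1)).card : ℤ) := by
  have key : ∀ q : ℤ,
      ∑ τ : ZMod d, (((Bfin hA h τ q).filter (fun b => φ b = 1)).card : ℤ) =
        ∑ b ∈ Tfin hA h q, φ b := by
    intro q
    rw [Tfin, Finset.sum_biUnion (disj_Bfin hA hn hdn q)]
    exact Finset.sum_congr rfl fun τ _ => (sum_phi_eq_card hA hn hdn φ hmin τ q).symm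
  rw [key, key]
  have h1 := key_sum hA hn hh hdn hdm φ hφ k
  have h2 := key_sum hA hn hh hdn hdm φ hφ k'
  have hn0 : (n:ℤ) ≠ 0 := by positivity
  exact mul_left_cancel₀ hn0 (h1.trans h2.symm)

end Stmt18Aux

/-- In the ordered minuscule case,
`|V_{i,j}(A)| = Σ_τ m_{A,τ}^j (n' − m_{A,τ}^i)` for `1 ≤ i < j ≤ h`. -/

theorem stmt18 (d n m : ℕ) [NeZero d] (hn : 1 ≤ n) (hm : 1 ≤ m)
    (A : Set (ZMod d × ℤ)) (hA : IsSemiModule d n m A)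
    (φ : ZMod d × ℤ → ℤ)
    (hφ : ∀ a ∈ A, shiftO d (fO d m a) (-(φ a * (n : ℤ))) ∈ Abar d n A)
    (hmin : ∀ b ∈ Abar d n A, φ b = 0 ∨ φ b = 1)
    (hord : ∀ k l : ℕ, 1 ≤ k → k < l → l ≤ Nat.gcd m n →
      ∀ b ∈ Abar d n A ∩ Omod d (Nat.gcd m n) (k : ℤ),
        ∀ b' ∈ Abar d n A ∩ Omod d (Nat.gcd m n) (l : ℤ),
          b.1 = b'.1 → b.2 ≤ b'.2)
    (i j : ℕ) (hi : 1 ≤ i) (hij : i < j) (hj : j ≤ Nat.gcd m n) :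
    ({p : (ZMod d × ℤ) × ℤ |
        p.1 ∈ Abar d n A ∩ Omod d (Nat.gcd m n) (i : ℤ) ∧
        shiftO d p.1 p.2 ∈ Abar d n A ∩ Omod d (Nat.gcd m n) (j : ℤ) ∧
        1 ≤ p.2 ∧ φ (shiftO d p.1 p.2) < φ p.1}.ncard : ℤ) =
      ∑ τ : ZMod d,
        (((Abar d n A ∩ Omod d (Nat.gcd m n) (j : ℤ) ∩
            {b | b.1 = τ + 1 ∧ φ b = 1}).ncard : ℤ)) *
          (((n / Nat.gcd m n : ℕ) : ℤ) -
            ((Abar d n A ∩ Omod d (Nat.gcd m n) (i : ℤ) ∩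
              {b | b.1 = τ + 1 ∧ φ b = 1}).ncard : ℤ)) := by
  classical
  set h := Nat.gcd m n with hhdef
  have hh : 1 ≤ h := Nat.gcd_pos_of_pos_left n hm
  have hdn : h ∣ n := Nat.gcd_dvd_right m n
  have hdm : h ∣ m := Nat.gcd_dvd_left m n
  set N : ℤ := ((n / h : ℕ) : ℤ) with hNdef
  -- rewrite the RHS ncards as Finset cards
  have hset : ∀ (σ : ZMod d) (q : ℤ),
      (Abar d n A ∩ Omod d h q ∩ {b | b.1 = σ ∧ φ b = 1}) =
        ↑((Stmt18Aux.Bfin hA h σ q).filter (fun b => φ b = 1)) := by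
    intro σ q
    ext b
    simp only [Set.mem_inter_iff, Set.mem_setOf_eq, Finset.mem_coe, Finset.mem_filter,
      Stmt18Aux.mem_Bfin hA hn hdn, Omod]
    tauto
  have hncard : ∀ (σ : ZMod d) (q : ℤ),
      ((Abar d n A ∩ Omod d h q ∩ {b | b.1 = σ ∧ φ b = 1}).ncard : ℤ) =
        (((Stmt18Aux.Bfin hA h σ q).filter (fun b => φ b = 1)).card : ℤ) := by
    intro σ q
    rw [hset, Set.ncard_coe_finset]
  -- the LHS as a Finset card
  set ψ : (ZMod d × ℤ) × ℤ → (ZMod d × ℤ) × (ZMod d × ℤ) :=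
    fun p => (p.1, shiftO d p.1 p.2) with hψdef
  have hψinj : Function.Injective ψ := by
    intro p q hpq
    simp only [hψdef, Prod.ext_iff, shiftO] at hpq
    obtain ⟨⟨ha1, ha2⟩, _, hc⟩ := hpq
    exact Prod.ext (Prod.ext ha1 ha2) (by omega)
  set V : Set ((ZMod d × ℤ) × ℤ) := {p : (ZMod d × ℤ) × ℤ |
        p.1 ∈ Abar d n A ∩ Omod d h (i : ℤ) ∧
        shiftO d p.1 p.2 ∈ Abar d n A ∩ Omod d h (j : ℤ) ∧
        1 ≤ p.2 ∧ φ (shiftO d p.1 p.2) < φ p.1} with hVdef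
  set Sfin : Finset ((ZMod d × ℤ) × (ZMod d × ℤ)) :=
    Finset.univ.biUnion (fun σ =>
      ((Stmt18Aux.Bfin hA h σ (i : ℤ)).filter (fun b => φ b = 1)) ×ˢ
        ((Stmt18Aux.Bfin hA h σ (j : ℤ)).filter (fun b => φ b = 0))) with hSdef
  have himg : ψ '' V = ↑Sfin := by
    ext q
    constructor
    · rintro ⟨p, hp, rfl⟩
      obtain ⟨⟨hp1A, hp1O⟩, ⟨hp2A, hp2O⟩, hk1, hφlt⟩ := hp
      have hφ10 : φ p.1 = 1 ∧ φ (shiftO d p.1 p.2) = 0 := by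
        rcases hmin _ hp1A with e1 | e1 <;> rcases hmin _ hp2A with e2 | e2 <;> omega
      simp only [hSdef, Finset.coe_biUnion, Set.mem_iUnion, Finset.mem_coe,
        Finset.mem_univ, Set.iUnion_true, Finset.mem_product, Finset.mem_filter]
      refine ⟨p.1.1, ⟨?_, hφ10.1⟩, ⟨?_, hφ10.2⟩⟩
      · exact (Stmt18Aux.mem_Bfin hA hn hdn).2 ⟨hp1A, rfl, hp1O⟩
      · exact (Stmt18Aux.mem_Bfin hA hn hdn).2 ⟨hp2A, rfl, hp2O⟩
    · intro hq
      simp only [hSdef, Finset.coe_biUnion, Set.mem_iUnion, Finset.mem_coe,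
        Finset.mem_univ, Set.iUnion_true, Finset.mem_product, Finset.mem_filter] at hq
      obtain ⟨σ, ⟨hb, hb1⟩, ⟨hb', hb'0⟩⟩ := hq
      rw [Stmt18Aux.mem_Bfin hA hn hdn] at hb hb'
      have hfst : q.1.1 = q.2.1 := by rw [hb.2.1, hb'.2.1]
      have hsh : shiftO d q.1 (q.2.2 - q.1.2) = q.2 := by
        unfold shiftO
        exact Prod.ext hfst (by ring)
      have hle : q.1.2 ≤ q.2.2 :=
        hord i j hi hij hj q.1 ⟨hb.1, hb.2.2⟩ q.2 ⟨hb'.1, hb'.2.2⟩ hfst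
      have hne : q.1.2 ≠ q.2.2 := by
        intro he
        have hsub := dvd_sub hb.2.2 hb'.2.2
        have heq : q.1.2 - (i:ℤ) - (q.2.2 - (j:ℤ)) = (j:ℤ) - (i:ℤ) := by omega
        rw [heq] at hsub
        have hcast : ((j - i : ℕ) : ℤ) = (j:ℤ) - (i:ℤ) := by omega
        rw [← hcast] at hsub
        have hd2 : h ∣ (j - i) := by exact_mod_cast hsub
        have := Nat.le_of_dvd (by omega) hd2
        omega
      refine ⟨(q.1, q.2.2 - q.1.2), ⟨⟨hb.1, hb.2.2⟩, ?_, by omega, ?_⟩, ?_⟩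
      · rw [hsh]; exact ⟨hb'.1, hb'.2.2⟩
      · rw [hsh, hb'0, hb1]; omega
      · simp only [hψdef]
        exact Prod.ext rfl hsh
  have h1 : (V.ncard : ℤ) = (Sfin.card : ℤ) := by
    rw [← Set.ncard_image_of_injective V hψinj, himg, Set.ncard_coe_finset]
  have hScard : Sfin.card = ∑ σ : ZMod d,
      ((Stmt18Aux.Bfin hA h σ (i : ℤ)).filter (fun b => φ b = 1)).card *
        ((Stmt18Aux.Bfin hA h σ (j : ℤ)).filter (fun b => φ b = 0)).card := by
    rw [hSdef, Finset.card_biUnion]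
    · exact Finset.sum_congr rfl fun σ _ => Finset.card_product _ _
    · intro σ _ σ' _ hne
      rw [Function.onFun, Finset.disjoint_left]
      rintro ⟨b, b'⟩ hb hb'
      rw [Finset.mem_product, Finset.mem_filter, Finset.mem_filter] at hb hb'
      have e1 : b.1 = σ := ((Stmt18Aux.mem_Bfin hA hn hdn).1 hb.1.1).2.1
      have e2 : b.1 = σ' := ((Stmt18Aux.mem_Bfin hA hn hdn).1 hb'.1.1).2.1
      exact hne (e1 ▸ e2 ▸ rfl)
  -- abbreviate counts
  set c1 : ZMod d → ℤ → ℤ := fun σ q =>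
    (((Stmt18Aux.Bfin hA h σ q).filter (fun b => φ b = 1)).card : ℤ) with hc1def
  have hLHS : (V.ncard : ℤ) = ∑ σ : ZMod d, c1 σ (i : ℤ) * (N - c1 σ (j : ℤ)) := by
    rw [h1, hScard]
    push_cast
    refine Finset.sum_congr rfl fun σ _ => ?_
    rw [Stmt18Aux.card_filter_zero hA hn hh hdn φ hmin σ (j : ℤ)]
  have hsum : ∑ σ : ZMod d, c1 σ (i : ℤ) = ∑ σ : ZMod d, c1 σ (j : ℤ) :=
    Stmt18Aux.sum_cnt_eq hA hn hm hh hdn hdm φ hφ hmin (i : ℤ) (j : ℤ)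
  calc (V.ncard : ℤ) = ∑ σ : ZMod d, c1 σ (i : ℤ) * (N - c1 σ (j : ℤ)) := hLHS
    _ = ∑ σ : ZMod d, c1 σ (j : ℤ) * (N - c1 σ (i : ℤ)) := by
        have e1 : ∀ (u v : ZMod d → ℤ),
            ∑ σ : ZMod d, u σ * (N - v σ) =
              N * (∑ σ : ZMod d, u σ) - ∑ σ : ZMod d, u σ * v σ := by
          intro u v
          rw [Finset.mul_sum, ← Finset.sum_sub_distrib]
          exact Finset.sum_congr rfl fun σ _ => by ring
        rw [e1, e1, hsum]
        congr 1
        exact Finset.sum_congr rfl fun σ _ => mul_comm _ _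
    _ = ∑ τ : ZMod d, c1 (τ + 1) (j : ℤ) * (N - c1 (τ + 1) (i : ℤ)) :=
        (Equiv.sum_comp (Equiv.addRight (1 : ZMod d))
          (fun σ => c1 σ (j : ℤ) * (N - c1 σ (i : ℤ)))).symm
    _ = _ := by
        refine Finset.sum_congr rfl fun τ _ => ?_
        rw [hncard, hncard]
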